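/- arXiv:1508.00319 — 3 statements merged into one kernel-verified Lean document; each statement's English description precedes it below -/
import Mathlib

section
/- For every integer m ≥ 5, 2^⌈m/2⌉ - ⌈m/2⌉ - 1 ≥ ⌊m/2⌋; hence, the weak modular sumset number of the cycle C_m for m ≥ 5 is ⌈m/2⌉. -/
lemma aux_2k : ∀ k : ℕ, 3 ≤ k → 2 * k + 1 ≤ 2 ^ k := by
  intro k hk
  induction k with
  | zero => omega
  | succ n ih =>
    rcases Nat.lt_or_ge n 3 with h | h
    · interval_cases n <;> simp_all <;> omega
    · have := ih (by omega)
      have h2 : 1 ≤ 2 ^ n := Nat.one_le_two_pow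
      rw [pow_succ]; omega

theorem stmt_13 (m : ℕ) (hm : 5 ≤ m) :
    m / 2 ≤ 2 ^ ((m + 1) / 2) - (m + 1) / 2 - 1 ∧
    max ((m + 1) / 2) (sInf {r : ℕ | 0 < r ∧ m / 2 ≤ 2 ^ r - r - 1}) = (m + 1) / 2 := by
  set k := (m + 1) / 2 with hk
  have hk3 : 3 ≤ k := by omega
  have h2k := aux_2k k hk3
  have h1 : m / 2 ≤ 2 ^ k - k - 1 := by omega
  refine ⟨h1, ?_⟩
  have hmem : k ∈ {r : ℕ | 0 < r ∧ m / 2 ≤ 2 ^ r - r - 1} := ⟨by omega, h1⟩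
  have := Nat.sInf_le hmem
  omega
end

section
/- Let G be a connected graph and suppose each vertex v is assigned a positive integer weight w(v) such that for every edge uv, w(u)·w(v) = k, where k is a fixed positive integer that is not a perfect square. Then G is bipartite. -/
theorem stmt_17 {V : Type*} (G : SimpleGraph V) (hconn : G.Connected)
    (k : ℕ) (hk : 0 < k) (hsq : ¬ ∃ t : ℕ, t * t = k)
    (w : V → ℕ) (hw : ∀ v, 0 < w v)
    (hprod : ∀ u v, G.Adj u v → w u * w v = k) :
    G.Colorable 2 := by
  refine ⟨SimpleGraph.Coloring.mk (fun v => if w v * w v < k then 0 else 1) ?_⟩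
  intro u v huv hc
  have hp := hprod u v huv
  have hkk : (w u * w u) * (w v * w v) = k * k := by
    have : (w u * w v) * (w u * w v) = k * k := by rw [hp]
    linarith [this, Nat.mul_comm (w u) (w v)]
  by_cases h1 : w u * w u < k
  · by_cases h2 : w v * w v < k
    · have : (w u * w u) * (w v * w v) < k * k :=
        Nat.mul_lt_mul_of_lt_of_lt h1 h2
      omega
    · simp [h1, h2] at hc
  · by_cases h2 : w v * w v < k
    · simp [h1, h2] at hc
    · push_neg at h1 h2
      have hle : w u * w u ≤ k := by
        by_contra hgt
        push_neg at hgt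
        have : k * k < (w u * w u) * (w v * w v) :=
          Nat.mul_lt_mul_of_lt_of_le hgt h2 (Nat.mul_pos (hw v) (hw v))
        omega
      exact hsq ⟨w u, le_antisymm hle h1⟩
end

section
/- Suppose f assigns non-empty subsets of ZMod n to the vertices of a graph G such that for every edge uv, either f(u) or f(v) is a singleton, and for every edge uv the sumset f(u) + f(v) equals all of ZMod n. Then every non-singleton-labeled vertex has set-label of cardinality n (i.e., equal to ZMod n), and the singleton-labeled neighbors of a common vertex must have distinct labels if f is injective; in particular, if G is connected then G is a star graph. -/
open Pointwise

theorem stmt_18 {V : Type*} (G : SimpleGraph V) (hconn : G.Connected)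
    (hedge : ∃ a b, G.Adj a b) (n : ℕ) [NeZero n]
    (f : V → Finset (ZMod n)) (hinj : Function.Injective f)
    (hne : ∀ v, (f v).Nonempty)
    (hweak : ∀ u v, G.Adj u v → (f u).card = 1 ∨ (f v).card = 1)
    (hmax : ∀ u v, G.Adj u v → f u + f v = (Finset.univ : Finset (ZMod n))) :
    (∀ v, 1 < (f v).card → f v = (Finset.univ : Finset (ZMod n))) ∧
    (∃ c : V, ∀ u v, G.Adj u v → u = c ∨ v = c) := by
  obtain ⟨a, b, hab⟩ := hedge
  -- key sumset lemma
  have lem : ∀ (A B : Finset (ZMod n)), A.card = 1 → A + B = Finset.univ →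
      B = Finset.univ := by
    intro A B hA hAB
    obtain ⟨x, rfl⟩ := Finset.card_eq_one.mp hA
    apply Finset.eq_univ_of_card
    have : ({x} + B).card = B.card := by
      rw [Finset.singleton_add]
      exact Finset.card_image_of_injective _ (add_right_injective x)
    rw [hAB, Finset.card_univ, ZMod.card] at this
    rw [ZMod.card]
    omega
  -- every edge has a univ endpoint
  have key : ∀ u v, G.Adj u v → f u = Finset.univ ∨ f v = Finset.univ := by
    intro u v huv
    rcases hweak u v huv with h | h
    · exact Or.inr (lem _ _ h (hmax u v huv))
    · left
      have := hmax u v huv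
      rw [add_comm] at this
      exact lem _ _ h this
  -- n = 1 is impossible
  have hn1 : n ≠ 1 := by
    intro hn
    subst hn
    have huniv : ∀ s : Finset (ZMod 1), s.Nonempty → s = Finset.univ := by
      intro s hs
      apply Finset.eq_univ_of_card
      have h1 : s.card ≤ Fintype.card (ZMod 1) := Finset.card_le_univ s
      rw [ZMod.card] at h1
      have h2 : 1 ≤ s.card := Finset.one_le_card.mpr hs
      rw [ZMod.card]
      omega
    have : f a = f b := by rw [huniv _ (hne a), huniv _ (hne b)]
    exact hab.ne (hinj this)
  have hn2 : 2 ≤ n := by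
    have := NeZero.pos n; omega
  have hcardu : (Finset.univ : Finset (ZMod n)).card = n := by simp
  -- part 1
  have part1 : ∀ v, 1 < (f v).card → f v = Finset.univ := by
    intro v hv
    -- find a neighbor of v
    have hne' : ∃ w, w ≠ v := by
      by_cases h : a = v
      · exact ⟨b, fun hbv => hab.ne (h.trans hbv.symm)⟩
      · exact ⟨a, h⟩
    obtain ⟨w, hw⟩ := hne'
    obtain ⟨p⟩ := hconn v w
    cases p with
    | nil => exact absurd rfl (Ne.symm hw)
    | cons h _ =>
      rename_i u _
      rcases hweak v u h with h1 | h1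
      · omega
      · have := hmax v u h
        rw [add_comm] at this
        exact lem _ _ h1 this
  refine ⟨part1, ?_⟩
  -- part 2: the star center
  rcases key a b hab with hc | hc
  · refine ⟨a, fun u v huv => ?_⟩
    rcases key u v huv with h | h
    · exact Or.inl (hinj (h.trans hc.symm))
    · exact Or.inr (hinj (h.trans hc.symm))
  · refine ⟨b, fun u v huv => ?_⟩
    rcases key u v huv with h | h
    · exact Or.inl (hinj (h.trans hc.symm))
    · exact Or.inr (hinj (h.trans hc.symm))
end
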